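/- Let m and m' be absolutely continuous probability measures on ℝ^d such that there exist constants r, R > 0 with r ≤ m(x)/m'(x) ≤ R for all x. Then χ²(m|m') ≤ 2R·KL(m|m'), where χ²(m|m') = ∫ (m(x)/m'(x) − 1)² m'(x) dx. -/

import Mathlib

open MeasureTheory Set


lemma phi_nonneg {t : ℝ} (ht : 0 < t) : 0 ≤ t * Real.log t - t + 1 := by
  have h := Real.log_le_sub_one_of_pos (show (0:ℝ) < t⁻¹ by positivity)
  rw [Real.log_inv] at h
  have h2 := mul_le_mul_of_nonneg_left h ht.le
  have h3 : t * t⁻¹ = 1 := mul_inv_cancel₀ ht.ne'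
  nlinarith

lemma aux1 {t : ℝ} (ht : 0 < t) (ht1 : t ≤ 1) :
    (t - 1) ^ 2 ≤ 2 * (t * Real.log t - t + 1) := by
  set f : ℝ → ℝ := fun s => 2 * (s * Real.log s - s + 1) - (s - 1) ^ 2 with hf
  have hder : ∀ s ∈ Set.Ioo t 1, HasDerivAt f (2 * Real.log s - 2 * (s - 1)) s := by
    intro s hs
    have hs0 : s ≠ 0 := (lt_trans ht hs.1).ne'
    have H := ((((Real.hasDerivAt_mul_log hs0).sub (hasDerivAt_id s)).add_const 1).const_mul
      2).sub (((hasDerivAt_id s).sub_const 1).pow 2)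
    refine H.congr_deriv ?_
    simp
  have hanti : AntitoneOn f (Set.Icc t 1) := by
    apply antitoneOn_of_deriv_nonpos (convex_Icc t 1)
    · exact ((continuous_const.mul ((Real.continuous_mul_log.sub continuous_id).add
        continuous_const)).sub ((continuous_id.sub continuous_const).pow 2)).continuousOn
    · intro s hs
      rw [interior_Icc] at hs
      exact (hder s hs).differentiableAt.differentiableWithinAt
    · intro s hs
      rw [interior_Icc] at hs
      rw [(hder s hs).deriv]
      have hlog := Real.log_le_sub_one_of_pos (lt_trans ht hs.1)
      nlinarith
  have h1 : f 1 ≤ f t := hanti (Set.mem_Icc.mpr ⟨le_refl t, ht1⟩)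
    (Set.mem_Icc.mpr ⟨ht1, le_refl 1⟩) ht1
  simp only [hf, Real.log_one] at h1
  nlinarith

lemma aux2 {t : ℝ} (ht : 1 ≤ t) :
    (t - 1) ^ 2 ≤ 2 * t * (t * Real.log t - t + 1) := by
  set g : ℝ → ℝ := fun s => 2 * (s ^ 2 * Real.log s) - 2 * s ^ 2 + 2 * s - (s - 1) ^ 2 with hg
  have hder : ∀ s ∈ Set.Ioo 1 t, HasDerivAt g
      (4 * (s * Real.log s) - 4 * s + 4) s := by
    intro s hs
    have hs0 : s ≠ 0 := by nlinarith [hs.1]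
    have H := (((((((hasDerivAt_id s).pow 2).mul (Real.hasDerivAt_log hs0)).const_mul 2).sub
      (((hasDerivAt_id s).pow 2).const_mul 2)).add ((hasDerivAt_id s).const_mul 2)).sub
      (((hasDerivAt_id s).sub_const 1).pow 2))
    refine H.congr_deriv ?_
    have : s ^ 2 * s⁻¹ = s := by field_simp
    simp
    field_simp
    ring
  have hcont : Continuous g := by
    have h1 : Continuous fun s : ℝ => s ^ 2 * Real.log s := by
      have : (fun s : ℝ => s ^ 2 * Real.log s) = fun s : ℝ => s * (s * Real.log s) := by
        funext s; ring
      rw [this]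
      exact continuous_id.mul Real.continuous_mul_log
    exact (((continuous_const.mul h1).sub (continuous_const.mul (continuous_pow 2))).add
      (continuous_const.mul continuous_id)).sub ((continuous_id.sub continuous_const).pow 2)
  have hmono : MonotoneOn g (Set.Icc 1 t) := by
    apply monotoneOn_of_deriv_nonneg (convex_Icc 1 t) hcont.continuousOn
    · intro s hs
      rw [interior_Icc] at hs
      exact (hder s hs).differentiableAt.differentiableWithinAt
    · intro s hs
      rw [interior_Icc] at hs
      rw [(hder s hs).deriv]
      have hs0 : (0:ℝ) < s := by nlinarith [hs.1]
      have hphi := phi_nonneg hs0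
      nlinarith
  have h1 : g 1 ≤ g t := hmono (Set.mem_Icc.mpr ⟨le_refl 1, ht⟩)
    (Set.mem_Icc.mpr ⟨ht, le_refl t⟩) ht
  simp only [hg, Real.log_one] at h1
  nlinarith

lemma key_ineq {t R : ℝ} (ht : 0 < t) (htR : t ≤ R) (hR1 : 1 ≤ R) :
    (t - 1) ^ 2 ≤ 2 * R * (t * Real.log t - t + 1) := by
  have hphi := phi_nonneg ht
  rcases le_total t 1 with h | h
  · nlinarith [aux1 ht h]
  · nlinarith [aux2 h]

/-- χ²(m|m') ≤ 2R·KL(m|m') under density ratio bounds. -/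
theorem stmt_2 {d : ℕ} (m m' : (Fin d → ℝ) → ℝ) (r R : ℝ)
    (hr : 0 < r) (hR : 0 < R)
    (hm : Measurable m) (hm' : Measurable m')
    (hm0 : ∀ x, 0 ≤ m x) (hm'0 : ∀ x, 0 ≤ m' x)
    (hm1 : ∫ x, m x = 1) (hm'1 : ∫ x, m' x = 1)
    (hratio : ∀ x, r ≤ m x / m' x ∧ m x / m' x ≤ R) :
    ∫ x, (m x / m' x - 1) ^ 2 * m' x ≤ 2 * R * ∫ x, Real.log (m x / m' x) * m x := by
  -- positivity of densities
  have hm'pos : ∀ x, 0 < m' x := by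
    intro x
    rcases (hm'0 x).lt_or_eq with h | h
    · exact h
    · exfalso
      have := (hratio x).1
      rw [← h, div_zero] at this
      linarith
  have hfm : ∀ x, m x / m' x * m' x = m x := fun x => div_mul_cancel₀ _ (hm'pos x).ne'
  have hmR : ∀ x, m x ≤ R * m' x := by
    intro x
    have := (div_le_iff₀ (hm'pos x)).mp (hratio x).2
    linarith [this]
  have hmr : ∀ x, r * m' x ≤ m x := by
    intro x
    have := (le_div_iff₀ (hm'pos x)).mp (hratio x).1
    linarith [this]
  have hmpos : ∀ x, 0 < m x := fun x => lt_of_lt_of_le (mul_pos hr (hm'pos x)) (hmr x)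
  -- integrability of m and m'
  have int_m : Integrable m := by
    by_contra h
    rw [integral_undef h] at hm1; norm_num at hm1
  have int_m' : Integrable m' := by
    by_contra h
    rw [integral_undef h] at hm'1; norm_num at hm'1
  -- 1 ≤ R
  have hR1 : (1:ℝ) ≤ R := by
    have h := integral_mono int_m (int_m'.const_mul R) hmR
    rw [integral_const_mul, hm1, hm'1, mul_one] at h
    exact h
  -- measurability of ratio
  have hfmeas : Measurable fun x => m x / m' x := hm.div hm'
  -- integrability of log-term
  have int_log : Integrable (fun x => Real.log (m x / m' x) * m x) := by
    apply Integrable.mono' (int_m.const_mul (max |Real.log r| |Real.log R|))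
    · exact ((Real.measurable_log.comp hfmeas).mul hm).aestronglyMeasurable
    · filter_upwards with x
      have h1 := (hratio x).1
      have h2 := (hratio x).2
      have hpos : 0 < m x / m' x := lt_of_lt_of_le hr h1
      have hl1 : Real.log r ≤ Real.log (m x / m' x) := Real.log_le_log hr h1
      have hl2 : Real.log (m x / m' x) ≤ Real.log R := Real.log_le_log hpos h2
      have hb : |Real.log (m x / m' x)| ≤ max |Real.log r| |Real.log R| := by
        rw [abs_le]
        constructor
        · exact le_trans (neg_le_neg (le_max_left _ _)) (le_trans (neg_abs_le _) hl1)
        · exact le_trans hl2 (le_trans (le_abs_self _) (le_max_right _ _))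
      rw [norm_mul, Real.norm_eq_abs, Real.norm_eq_abs, abs_of_nonneg (hm0 x)]
      exact mul_le_mul_of_nonneg_right hb (hm0 x)
  -- integrability of χ² integrand
  have int_chi : Integrable (fun x => (m x / m' x - 1) ^ 2 * m' x) := by
    apply Integrable.mono' (int_m'.const_mul ((R + 1) ^ 2))
    · exact (((hfmeas.sub measurable_const).pow measurable_const).mul hm').aestronglyMeasurable
    · filter_upwards with x
      have h1 := (hratio x).1
      have h2 := (hratio x).2
      rw [norm_mul, Real.norm_eq_abs, Real.norm_eq_abs, abs_of_nonneg (hm'0 x),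
        abs_of_nonneg (sq_nonneg _)]
      have : (m x / m' x - 1) ^ 2 ≤ (R + 1) ^ 2 := by nlinarith
      exact mul_le_mul_of_nonneg_right this (hm'0 x)
  -- the RHS integrand
  have int_rhs : Integrable (fun x => 2 * R * (Real.log (m x / m' x) * m x - m x + m' x)) :=
    (((int_log.sub int_m).add int_m').const_mul (2 * R))
  -- pointwise inequality
  have key_pt : ∀ x, (m x / m' x - 1) ^ 2 * m' x
      ≤ 2 * R * (Real.log (m x / m' x) * m x - m x + m' x) := by
    intro x
    set t := m x / m' x with htdef
    have htpos : 0 < t := lt_of_lt_of_le hr (hratio x).1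
    have hk := key_ineq htpos (hratio x).2 hR1
    have hmul := mul_le_mul_of_nonneg_right hk (hm'0 x)
    have hfmx := hfm x
    calc (t - 1) ^ 2 * m' x ≤ 2 * R * (t * Real.log t - t + 1) * m' x := hmul
      _ = 2 * R * (Real.log t * (t * m' x) - t * m' x + m' x) := by ring
      _ = 2 * R * (Real.log t * m x - m x + m' x) := by rw [hfmx]
  -- conclude
  have hmono := integral_mono int_chi int_rhs key_pt
  have heq : ∫ x, 2 * R * (Real.log (m x / m' x) * m x - m x + m' x)
      = 2 * R * ∫ x, Real.log (m x / m' x) * m x := by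
    have intA : Integrable (fun a => Real.log (m a / m' a) * m a - m a) := int_log.sub int_m
    rw [integral_const_mul, integral_add intA int_m', integral_sub int_log int_m, hm1, hm'1]
    ring
  rw [heq] at hmono
  exact hmono
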